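/- Let f be a discrete Morse-Bott function on a finite abstract simplicial complex K, let I = C^red be an isolated invariant set (a nonempty reduced collection that is not a noncritical pair) with index pair (N, E). Then for every k, dim H_k(N, E; ℤ/2) = b_k(C^red), the k-th mod-2 Betti number of the reduced boundary complex of C^red; equivalently, the homological Conley index C_t(I) equals the Poincaré polynomial P_t(C^red). -/
import Mathlib


open Finset

noncomputable section
open scoped Classical

/-- `σ` is a facet of `τ`: `σ ⊆ τ` and `dim σ = dim τ − 1`. -/
def Facet (σ τ : Finset ℕ) : Prop := σ ⊆ τ ∧ σ.card + 1 = τ.card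

/-- A finite abstract simplicial complex: a finite family of nonempty finite sets
closed under taking nonempty subsets. -/
def IsComplex (K : Finset (Finset ℕ)) : Prop :=
  (∀ σ ∈ K, σ.Nonempty) ∧ ∀ σ ∈ K, ∀ ν, ν ⊆ σ → ν.Nonempty → ν ∈ K

/-- The closure of a set of cells: all nonempty subsets of its cells. -/
def closureOf (S : Finset (Finset ℕ)) : Finset (Finset ℕ) :=
  S.biUnion fun σ => σ.powerset.filter fun ν => ν ≠ ∅

/-- The graph on `C` joining two cells whenever their closures intersect is connected. -/
def ConnectedOn (C : Finset (Finset ℕ)) : Prop :=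
  ∀ a ∈ C, ∀ b ∈ C,
    Relation.ReflTransGen
      (fun x y => x ∈ C ∧ y ∈ C ∧ (closureOf {x} ∩ closureOf {y}).Nonempty) a b

/-- A nonempty set of cells of `K`, all with the same `f`-value, whose
closure-intersection graph is connected. -/
def IsPreCollection (K : Finset (Finset ℕ)) (f : Finset ℕ → ℝ) (C : Finset (Finset ℕ)) :
    Prop :=
  C ⊆ K ∧ C.Nonempty ∧ (∀ σ ∈ C, ∀ τ ∈ C, f σ = f τ) ∧ ConnectedOn C

/-- A collection for `f`: a maximal constant-value connected set of cells. -/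
def IsCollection (K : Finset (Finset ℕ)) (f : Finset ℕ → ℝ) (C : Finset (Finset ℕ)) :
    Prop :=
  IsPreCollection K f C ∧ ∀ C', IsPreCollection K f C' → C ⊆ C' → C' = C

/-- `#{τ ∉ C : σ < τ, f(τ) < f(σ)}`. -/
def UpCount (K : Finset (Finset ℕ)) (f : Finset ℕ → ℝ) (C : Finset (Finset ℕ))
    (σ : Finset ℕ) : ℕ :=
  (K.filter fun τ => τ ∉ C ∧ Facet σ τ ∧ f τ < f σ).card

/-- `#{ν ∉ C : ν < σ, f(ν) > f(σ)}`. -/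
def DownCount (K : Finset (Finset ℕ)) (f : Finset ℕ → ℝ) (C : Finset (Finset ℕ))
    (σ : Finset ℕ) : ℕ :=
  (K.filter fun ν => ν ∉ C ∧ Facet ν σ ∧ f σ < f ν).card

/-- A discrete Morse-Bott function on `K`. -/
def IsMorseBott (K : Finset (Finset ℕ)) (f : Finset ℕ → ℝ) : Prop :=
  ∀ C, IsCollection K f C → ∀ σ ∈ C, UpCount K f C σ ≤ 1 ∧ DownCount K f C σ ≤ 1

/-- `σ` is upward noncritical w.r.t. `C`. -/
def UpNoncrit (K : Finset (Finset ℕ)) (f : Finset ℕ → ℝ) (C : Finset (Finset ℕ))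
    (σ : Finset ℕ) : Prop :=
  ∃ w ∈ K, w ∉ C ∧ Facet σ w ∧ f w < f σ

/-- `σ` is downward noncritical w.r.t. `C`. -/
def DownNoncrit (K : Finset (Finset ℕ)) (f : Finset ℕ → ℝ) (C : Finset (Finset ℕ))
    (σ : Finset ℕ) : Prop :=
  ∃ w ∈ K, w ∉ C ∧ Facet w σ ∧ f σ < f w

/-- The reduced collection `C^red`: the cells of `C` that are neither upward nor
downward noncritical w.r.t. `C`. -/
def reducedOf (K : Finset (Finset ℕ)) (f : Finset ℕ → ℝ) (C : Finset (Finset ℕ)) :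
    Finset (Finset ℕ) :=
  C.filter fun σ => ¬ UpNoncrit K f C σ ∧ ¬ DownNoncrit K f C σ

/-- A noncritical pair: a two-element set `{σ, τ}` with `σ < τ` and `f σ ≥ f τ`. -/
def IsNoncritPair (f : Finset ℕ → ℝ) (S : Finset (Finset ℕ)) : Prop :=
  ∃ σ τ, Facet σ τ ∧ f τ ≤ f σ ∧ S = {σ, τ}

/-- A discrete Morse function in Forman's sense. -/
def IsDiscreteMorse (K : Finset (Finset ℕ)) (g : Finset ℕ → ℝ) : Prop :=
  ∀ σ ∈ K, (K.filter fun τ => Facet σ τ ∧ g τ ≤ g σ).card ≤ 1 ∧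
    (K.filter fun ν => Facet ν σ ∧ g σ ≤ g ν).card ≤ 1

/-- A critical cell of `g`. -/
def IsCritical (K : Finset (Finset ℕ)) (g : Finset ℕ → ℝ) (σ : Finset ℕ) : Prop :=
  σ ∈ K ∧ (K.filter fun τ => Facet σ τ ∧ g τ ≤ g σ).card = 0 ∧
    (K.filter fun ν => Facet ν σ ∧ g σ ≤ g ν).card = 0

/-- The `k`-dimensional cells of `S`. -/
def cells (S : Finset (Finset ℕ)) (k : ℕ) : Finset (Finset ℕ) :=
  S.filter fun σ => σ.card = k + 1

/-- The `ℤ/2`-vector space with basis the `k`-dimensional cells of `S`. -/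
abbrev Chain (S : Finset (Finset ℕ)) (k : ℕ) : Type :=
  ↥(cells S k) → ZMod 2

/-- The boundary operator `C_k(S) → C_j(S)` (used with `j = k − 1`), sending each
`k`-cell of `S` to the sum of those of its facets that lie in `S`. -/
def bdry (S : Finset (Finset ℕ)) (j k : ℕ) : Chain S k →ₗ[ZMod 2] Chain S j :=
  Matrix.mulVecLin (Matrix.of fun (ν : ↥(cells S j)) (τ : ↥(cells S k)) =>
    if Facet ν.1 τ.1 then (1 : ZMod 2) else 0)

/-- `b_k(S) = dim (ker ∂_k / im ∂_{k+1})`, the `k`-th mod-2 Betti number of the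
boundary complex of `S`. -/
def bettiOf (S : Finset (Finset ℕ)) (k : ℕ) : ℕ :=
  Module.finrank (ZMod 2)
    (↥(LinearMap.ker (bdry S (k - 1) k)) ⧸
      Submodule.comap (LinearMap.ker (bdry S (k - 1) k)).subtype
        (LinearMap.range (bdry S k (k + 1))))

/-- The Poincaré polynomial `P_t(S) = Σ_k b_k(S) t^k`. -/
def PtOf (S : Finset (Finset ℕ)) : Polynomial ℕ :=
  ∑ k ∈ Finset.range (S.sup Finset.card), Polynomial.C (bettiOf S k) * Polynomial.X ^ k

/-- `dim H_k(N, E; ℤ/2)`: the homology of the quotient chain complex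
`C_*(N)/C_*(E)`, computed via the relative chain complex with basis the cells of
`N \ E` (the image of the basis of `C_k(N)` in the quotient) and the induced
boundary. -/
def relBetti (N E : Finset (Finset ℕ)) (k : ℕ) : ℕ := bettiOf (N \ E) k

/-- The relative Poincaré polynomial `Σ_k dim H_k(N, E; ℤ/2) t^k`. -/
def relPt (N E : Finset (Finset ℕ)) : Polynomial ℕ := PtOf (N \ E)

/-- The Euler characteristic `Σ_k (−1)^k dim H_k(S; ℤ/2)`. -/
def eulerOf (S : Finset (Finset ℕ)) : ℤ :=
  ∑ k ∈ Finset.range (S.sup Finset.card), (-1 : ℤ) ^ k * bettiOf S k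

/-- The relative Euler characteristic `χ(N, E) = Σ_k (−1)^k dim H_k(N, E; ℤ/2)`. -/
def relEuler (N E : Finset (Finset ℕ)) : ℤ :=
  ∑ k ∈ Finset.range ((N \ E).sup Finset.card), (-1 : ℤ) ^ k * relBetti N E k

lemma singleton_precoll (K : Finset (Finset ℕ)) (f : Finset ℕ → ℝ) (σ : Finset ℕ)
    (hσ : σ ∈ K) : IsPreCollection K f {σ} := by
  refine ⟨Finset.singleton_subset_iff.mpr hσ, ⟨σ, Finset.mem_singleton_self σ⟩, ?_, ?_⟩
  · intro a ha b hb
    rw [Finset.mem_singleton] at ha hb; subst ha; subst hb; rfl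
  · intro a ha b hb
    rw [Finset.mem_singleton] at ha hb; subst ha; subst hb
    exact Relation.ReflTransGen.refl

lemma exists_collection (K : Finset (Finset ℕ)) (f : Finset ℕ → ℝ) (σ : Finset ℕ)
    (hσ : σ ∈ K) : ∃ D, IsCollection K f D ∧ σ ∈ D := by
  classical
  set S := K.powerset.filter (fun D => IsPreCollection K f D ∧ σ ∈ D) with hS
  have hne : S.Nonempty := ⟨{σ}, by
    simp only [hS, Finset.mem_filter, Finset.mem_powerset]
    exact ⟨Finset.singleton_subset_iff.mpr hσ, singleton_precoll K f σ hσ,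
      Finset.mem_singleton_self σ⟩⟩
  obtain ⟨D, hD, hmax⟩ := S.exists_max_image Finset.card hne
  simp only [hS, Finset.mem_filter, Finset.mem_powerset] at hD
  refine ⟨D, ⟨hD.2.1, ?_⟩, hD.2.2⟩
  intro C' hC' hsub
  have hC'S : C' ∈ S := by
    simp only [hS, Finset.mem_filter, Finset.mem_powerset]
    exact ⟨hC'.1, hC', hsub hD.2.2⟩
  exact (Finset.eq_of_subset_of_card_le hsub (hmax C' hC'S)).symm

lemma face_le (K : Finset (Finset ℕ)) (hK : IsComplex K) (f : Finset ℕ → ℝ)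
    (hf : IsMorseBott K f) (C : Finset (Finset ℕ)) (hC : IsCollection K f C)
    (v : ℝ) (hv : ∀ τ ∈ C, f τ = v) :
    ∀ m σ τ, τ ∈ reducedOf K f C → σ ⊆ τ → σ.Nonempty → τ.card - σ.card = m →
      σ = τ ∨ f σ ≤ v := by
  intro m
  induction m using Nat.strong_induction_on with
  | _ m ih =>
    intro σ τ hτ hsub hne hm
    have hτC : τ ∈ C := (Finset.mem_filter.mp hτ).1
    have hτK : τ ∈ K := hC.1.1 hτC
    have hσK : σ ∈ K := hK.2 τ hτK σ hsub hne
    have hfτ : f τ = v := hv τ hτC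
    have hcard : σ.card ≤ τ.card := Finset.card_le_card hsub
    rcases m with _ | (_ | n)
    · left
      exact Finset.eq_of_subset_of_card_le hsub (by omega)
    · right
      by_contra hlt
      push_neg at hlt
      have hσC : σ ∉ C := fun h => absurd (hv σ h) (by linarith)
      have hdn : DownNoncrit K f C τ := ⟨σ, hσK, hσC, ⟨hsub, by omega⟩, by linarith⟩
      exact (Finset.mem_filter.mp hτ).2.2 hdn
    · right
      by_contra hlt
      push_neg at hlt
      obtain ⟨D, hD, hσD⟩ := exists_collection K f σ hσK
      have hsd : 1 < (τ \ σ).card := by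
        rw [Finset.card_sdiff_of_subset hsub]; omega
      obtain ⟨x, hx, y, hy, hxy⟩ := Finset.one_lt_card.mp hsd
      have key : ∀ z ∈ τ \ σ, insert z σ ∈ K.filter
          (fun τ' => τ' ∉ D ∧ Facet σ τ' ∧ f τ' < f σ) := by
        intro z hz
        obtain ⟨hzτ, hzσ⟩ := Finset.mem_sdiff.mp hz
        have hwsub : insert z σ ⊆ τ := Finset.insert_subset hzτ hsub
        have hwcard : (insert z σ).card = σ.card + 1 := Finset.card_insert_of_notMem hzσ
        have hwK : insert z σ ∈ K := hK.2 τ hτK _ hwsub (Finset.insert_nonempty z σ)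
        have hwle : f (insert z σ) ≤ v := by
          rcases ih (n + 1) (by omega) (insert z σ) τ hτ hwsub
              (Finset.insert_nonempty z σ) (by omega) with h | h
          · exfalso; have hcc := congrArg Finset.card h; simp only [hwcard] at hcc; omega
          · exact h
        have hwD : insert z σ ∉ D := by
          intro h
          have := hD.1.2.2.1 σ hσD (insert z σ) h
          linarith
        exact Finset.mem_filter.mpr ⟨hwK, hwD, ⟨Finset.subset_insert z σ, hwcard.symm⟩,
          by linarith⟩
      have hne2 : insert x σ ≠ insert y σ := by
        intro h
        have hxσ := (Finset.mem_sdiff.mp hx).2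
        have hmem : x ∈ insert y σ := h ▸ Finset.mem_insert_self x σ
        rcases Finset.mem_insert.mp hmem with h' | h'
        · exact hxy h'
        · exact hxσ h'
      have hsub2 : ({insert x σ, insert y σ} : Finset (Finset ℕ)) ⊆
          K.filter (fun τ' => τ' ∉ D ∧ Facet σ τ' ∧ f τ' < f σ) := by
        intro w hw
        rcases Finset.mem_insert.mp hw with h | h
        · exact h ▸ key x hx
        · rw [Finset.mem_singleton] at h
          exact h ▸ key y hy
      have h2 : 2 ≤ UpCount K f D σ := by
        have hcc := Finset.card_le_card hsub2
        rwa [Finset.card_pair hne2] at hcc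
      have hu := (hf D hD σ hσD).1
      omega

/-- For an isolated invariant set `I = C^red` (nonempty, not a noncritical
pair) with index pair `(N, E)`, `dim H_k(N, E; ℤ/2) = b_k(C^red)` for every `k`; i.e.
the homological Conley index `C_t(I)` equals the Poincaré polynomial `P_t(C^red)`. -/
theorem statement16 (K : Finset (Finset ℕ)) (hK : IsComplex K) (f : Finset ℕ → ℝ)
    (hf : IsMorseBott K f) (C : Finset (Finset ℕ)) (hC : IsCollection K f C)
    (v : ℝ) (hv : ∀ τ ∈ C, f τ = v)
    (hne : (reducedOf K f C).Nonempty) (hnp : ¬ IsNoncritPair f (reducedOf K f C)) :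
    let I := reducedOf K f C
    let N := closureOf I
    let E := N.filter fun σ => σ ∉ I ∧ f σ ≤ v
    ∀ k, relBetti N E k = bettiOf I k := by
  intro I N E k
  show bettiOf ((closureOf (reducedOf K f C)) \ ((closureOf (reducedOf K f C)).filter
      fun σ => σ ∉ reducedOf K f C ∧ f σ ≤ v)) k = bettiOf (reducedOf K f C) k
  congr 1
  have hIC : reducedOf K f C ⊆ C := Finset.filter_subset _ C
  ext σ
  constructor
  · intro hσ
    rw [Finset.mem_sdiff] at hσ
    obtain ⟨hσN, hσE⟩ := hσ
    by_contra hσI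
    have hfσ : ¬ f σ ≤ v := fun h => hσE (Finset.mem_filter.mpr ⟨hσN, hσI, h⟩)
    obtain ⟨τ, hτI, hστ⟩ := Finset.mem_biUnion.mp hσN
    rw [Finset.mem_filter, Finset.mem_powerset] at hστ
    have hσne : σ.Nonempty := Finset.nonempty_iff_ne_empty.mpr hστ.2
    rcases face_le K hK f hf C hC v hv (τ.card - σ.card) σ τ hτI hστ.1 hσne rfl with h | h
    · exact hσI (h ▸ hτI)
    · exact hfσ h
  · intro hσI
    rw [Finset.mem_sdiff]
    have hσK : σ ∈ K := hC.1.1 (hIC hσI)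
    have hσN : σ ∈ closureOf (reducedOf K f C) := Finset.mem_biUnion.mpr
      ⟨σ, hσI, Finset.mem_filter.mpr ⟨Finset.mem_powerset_self σ,
        Finset.nonempty_iff_ne_empty.mp (hK.1 σ hσK)⟩⟩
    exact ⟨hσN, fun h => (Finset.mem_filter.mp h).2.1 hσI⟩
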